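/- Robbins–Siegmund theorem: Let (Ω, 𝓕, (𝓕_k)_{k∈ℕ₀}, ℙ) be a filtered probability space and let (U_k), (Y_k), (Z_k), (W_k) be sequences of nonnegative real-valued random variables on Ω such that (i) U_k, Y_k, Z_k, W_k are 𝓕_k-measurable for each k, (ii) 𝔼(Y_{k+1} | 𝓕_k) ≤ (1 + U_k) Y_k − Z_k + W_k almost surely for each k, and (iii) Σ_k U_k < ∞ and Σ_k W_k < ∞ almost surely. Then (Y_k) converges almost surely to a finite (i.e., real-valued) random variable Y, and Σ_k Z_k < ∞ almost surely. -/

import Mathlib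

open MeasureTheory Filter
open scoped Topology

namespace RobbinsSiegmundAux

variable {Ω : Type*}

noncomputable def rsP (U : ℕ → Ω → ℝ) (k : ℕ) (ω : Ω) : ℝ :=
  ∏ j ∈ Finset.range k, (1 + U j ω)

noncomputable def rsA (U : ℕ → Ω → ℝ) (k : ℕ) (ω : Ω) : ℝ := (rsP U k ω)⁻¹

def rsGood (U W : ℕ → Ω → ℝ) (n k : ℕ) (ω : Ω) : Prop :=
  (∑ j ∈ Finset.range (k + 1), U j ω) ≤ n ∧ (∑ j ∈ Finset.range (k + 1), W j ω) ≤ n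

noncomputable def rsD (U Y Z W : ℕ → Ω → ℝ) (j : ℕ) (ω : Ω) : ℝ :=
  rsA U (j + 1) ω * Y (j + 1) ω - rsA U j ω * Y j ω + rsA U (j + 1) ω * (Z j ω - W j ω)

noncomputable def rsT (U Y Z W : ℕ → Ω → ℝ) (n j : ℕ) : Ω → ℝ :=
  Set.indicator {ω | rsGood U W n j ω} (rsD U Y Z W j)

noncomputable def rsX (U Y Z W : ℕ → Ω → ℝ) (n k : ℕ) (ω : Ω) : ℝ :=
  n + Y 0 ω + ∑ j ∈ Finset.range k, rsT U Y Z W n j ω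

variable {U Y Z W : ℕ → Ω → ℝ}

theorem rsP_pos (hUnn : ∀ k, ∀ ω, 0 ≤ U k ω) (k : ℕ) (ω : Ω) : 0 < rsP U k ω :=
  Finset.prod_pos fun j _ => by have := hUnn j ω; linarith

theorem rsP_succ (k : ℕ) (ω : Ω) : rsP U (k + 1) ω = rsP U k ω * (1 + U k ω) :=
  Finset.prod_range_succ _ _

theorem rsP_mono (hUnn : ∀ k, ∀ ω, 0 ≤ U k ω) (ω : Ω) : Monotone fun k => rsP U k ω := by
  apply monotone_nat_of_le_succ
  intro k
  rw [rsP_succ]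
  nlinarith [rsP_pos hUnn k ω, hUnn k ω]

theorem rsP_zero (ω : Ω) : rsP U 0 ω = 1 := by simp [rsP]

theorem rsP_one_le (hUnn : ∀ k, ∀ ω, 0 ≤ U k ω) (k : ℕ) (ω : Ω) : 1 ≤ rsP U k ω := by
  have h := rsP_mono hUnn ω (Nat.zero_le k)
  simp only at h
  rwa [rsP_zero] at h

theorem rsA_pos (hUnn : ∀ k, ∀ ω, 0 ≤ U k ω) (k : ℕ) (ω : Ω) : 0 < rsA U k ω :=
  inv_pos.2 (rsP_pos hUnn k ω)

theorem rsA_le_one (hUnn : ∀ k, ∀ ω, 0 ≤ U k ω) (k : ℕ) (ω : Ω) : rsA U k ω ≤ 1 :=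
  inv_le_one_of_one_le₀ (rsP_one_le hUnn k ω)

theorem rsA_zero (ω : Ω) : rsA U 0 ω = 1 := by simp [rsA, rsP]

theorem rsA_succ (hUnn : ∀ k, ∀ ω, 0 ≤ U k ω) (k : ℕ) (ω : Ω) :
    rsA U (k + 1) ω * (1 + U k ω) = rsA U k ω := by
  have h1 : (0:ℝ) < rsP U k ω := rsP_pos hUnn k ω
  have h2 : (0:ℝ) < 1 + U k ω := by have := hUnn k ω; linarith
  rw [rsA, rsA, rsP_succ]
  field_simp

theorem rsGood_anti (hUnn : ∀ k, ∀ ω, 0 ≤ U k ω) (hWnn : ∀ k, ∀ ω, 0 ≤ W k ω)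
    {n k : ℕ} {ω : Ω} (h : rsGood U W n (k + 1) ω) : rsGood U W n k ω := by
  obtain ⟨h1, h2⟩ := h
  rw [Finset.sum_range_succ] at h1 h2
  exact ⟨by have := hUnn (k+1) ω; linarith, by have := hWnn (k+1) ω; linarith⟩

theorem rsX_zero (n : ℕ) (ω : Ω) : rsX U Y Z W n 0 ω = n + Y 0 ω := by simp [rsX]

theorem rsX_succ (n k : ℕ) (ω : Ω) :
    rsX U Y Z W n (k + 1) ω = rsX U Y Z W n k ω + rsT U Y Z W n k ω := by
  rw [rsX, rsX, Finset.sum_range_succ]; ring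

theorem rsT_of_good {n k : ℕ} {ω : Ω} (h : rsGood U W n k ω) :
    rsT U Y Z W n k ω = rsD U Y Z W k ω :=
  Set.indicator_of_mem (show ω ∈ {ω | rsGood U W n k ω} from h) _

theorem rsT_of_not_good {n k : ℕ} {ω : Ω} (h : ¬ rsGood U W n k ω) :
    rsT U Y Z W n k ω = 0 :=
  Set.indicator_of_notMem (show ω ∉ {ω | rsGood U W n k ω} from h) _

theorem rsX_closed (hUnn : ∀ k, ∀ ω, 0 ≤ U k ω) (hWnn : ∀ k, ∀ ω, 0 ≤ W k ω)
    {n : ℕ} {ω : Ω} :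
    ∀ k, rsGood U W n k ω →
      rsX U Y Z W n (k + 1) ω = n + rsA U (k + 1) ω * Y (k + 1) ω +
        ∑ j ∈ Finset.range (k + 1), rsA U (j + 1) ω * (Z j ω - W j ω) := by
  intro k
  induction k with
  | zero =>
    intro h
    rw [rsX_succ, rsX_zero, rsT_of_good h, rsD, rsA_zero]
    simp [Finset.sum_range_one]
    ring
  | succ k ih =>
    intro h
    have hk : rsGood U W n k ω := rsGood_anti hUnn hWnn h
    rw [rsX_succ, ih hk, rsT_of_good h, rsD, Finset.sum_range_succ _ (k + 1)]
    ring

theorem rsX_nonneg (hUnn : ∀ k, ∀ ω, 0 ≤ U k ω) (hYnn : ∀ k, ∀ ω, 0 ≤ Y k ω)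
    (hZnn : ∀ k, ∀ ω, 0 ≤ Z k ω) (hWnn : ∀ k, ∀ ω, 0 ≤ W k ω) (n : ℕ) (ω : Ω) :
    ∀ k, 0 ≤ rsX U Y Z W n k ω := by
  intro k
  induction k with
  | zero => rw [rsX_zero]; have := hYnn 0 ω; positivity
  | succ k ih =>
    by_cases h : rsGood U W n k ω
    · rw [rsX_closed hUnn hWnn k h]
      have hY : 0 ≤ rsA U (k + 1) ω * Y (k + 1) ω :=
        mul_nonneg (rsA_pos hUnn _ ω).le (hYnn _ ω)
      have hsum : ∀ j ∈ Finset.range (k + 1),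
          - W j ω ≤ rsA U (j + 1) ω * (Z j ω - W j ω) := by
        intro j _
        have ha1 : 0 < rsA U (j+1) ω := rsA_pos hUnn _ ω
        have ha2 : rsA U (j+1) ω ≤ 1 := rsA_le_one hUnn _ ω
        nlinarith [hZnn j ω, hWnn j ω]
      have h2 := Finset.sum_le_sum hsum
      rw [Finset.sum_neg_distrib] at h2
      have h3 : (∑ j ∈ Finset.range (k + 1), W j ω) ≤ n := h.2
      linarith
    · rw [rsX_succ, rsT_of_not_good h, add_zero]
      exact ih

section Meas

variable {m0 : MeasurableSpace Ω} {ℱ : Filtration ℕ m0}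
  (hUmeas : ∀ k, StronglyMeasurable[ℱ k] (U k))
  (hYmeas : ∀ k, StronglyMeasurable[ℱ k] (Y k))
  (hZmeas : ∀ k, StronglyMeasurable[ℱ k] (Z k))
  (hWmeas : ∀ k, StronglyMeasurable[ℱ k] (W k))

include hUmeas in
theorem rsP_meas {j k : ℕ} (hjk : j ≤ k + 1) :
    StronglyMeasurable[ℱ k] (fun ω => rsP U j ω) := by
  apply Finset.stronglyMeasurable_fun_prod
  intro i hi
  have hik : i ≤ k := by have := Finset.mem_range.1 hi; omega
  exact stronglyMeasurable_const.add ((hUmeas i).mono (ℱ.mono hik))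

include hUmeas in
theorem rsA_meas {j k : ℕ} (hjk : j ≤ k + 1) :
    StronglyMeasurable[ℱ k] (fun ω => rsA U j ω) :=
  ((rsP_meas hUmeas hjk).measurable.inv).stronglyMeasurable

include hUmeas hWmeas in
theorem rsGood_measSet (n k : ℕ) :
    MeasurableSet[ℱ k] {ω | rsGood U W n k ω} := by
  have h1 : MeasurableSet[ℱ k] {ω | (∑ j ∈ Finset.range (k + 1), U j ω) ≤ (n : ℝ)} := by
    apply measurableSet_le _ measurable_const
    apply Finset.measurable_sum
    intro i hi
    have hik : i ≤ k := by have := Finset.mem_range.1 hi; omega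
    exact ((hUmeas i).mono (ℱ.mono hik)).measurable
  have h2 : MeasurableSet[ℱ k] {ω | (∑ j ∈ Finset.range (k + 1), W j ω) ≤ (n : ℝ)} := by
    apply measurableSet_le _ measurable_const
    apply Finset.measurable_sum
    intro i hi
    have hik : i ≤ k := by have := Finset.mem_range.1 hi; omega
    exact ((hWmeas i).mono (ℱ.mono hik)).measurable
  exact h1.inter h2

include hUmeas hYmeas hZmeas hWmeas in
theorem rsD_meas (j : ℕ) : StronglyMeasurable[ℱ (j + 1)] (rsD U Y Z W j) := by
  have ha1 : StronglyMeasurable[ℱ (j + 1)] (fun ω => rsA U (j + 1) ω) :=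
    rsA_meas hUmeas (by omega)
  have ha0 : StronglyMeasurable[ℱ (j + 1)] (fun ω => rsA U j ω) :=
    rsA_meas hUmeas (by omega)
  exact ((ha1.mul (hYmeas (j + 1))).sub
    (ha0.mul ((hYmeas j).mono (ℱ.mono (by omega))))).add
    (ha1.mul (((hZmeas j).mono (ℱ.mono (by omega))).sub
      ((hWmeas j).mono (ℱ.mono (by omega)))))

include hUmeas hYmeas hZmeas hWmeas in
theorem rsT_meas (n j : ℕ) : StronglyMeasurable[ℱ (j + 1)] (rsT U Y Z W n j) :=
  (rsD_meas hUmeas hYmeas hZmeas hWmeas j).indicator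
    ((ℱ.mono (Nat.le_succ j)) _ (rsGood_measSet hUmeas hWmeas n j))

include hUmeas hYmeas hZmeas hWmeas in
theorem rsX_meas (n k : ℕ) : StronglyMeasurable[ℱ k] (rsX U Y Z W n k) := by
  have : StronglyMeasurable[ℱ k] (fun ω => ∑ j ∈ Finset.range k, rsT U Y Z W n j ω) := by
    apply Finset.stronglyMeasurable_fun_sum
    intro j hj
    have hjk : j + 1 ≤ k := Finset.mem_range.1 hj
    exact (rsT_meas hUmeas hYmeas hZmeas hWmeas n j).mono (ℱ.mono hjk)
  exact (stronglyMeasurable_const.add ((hYmeas 0).mono (ℱ.mono (Nat.zero_le k)))).add this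

end Meas

section Prob

variable {m0 : MeasurableSpace Ω} {μ : Measure Ω} [IsProbabilityMeasure μ] {ℱ : Filtration ℕ m0}

theorem rsZ_bound (hYnn : ∀ k, ∀ ω, 0 ≤ Y k ω)
    (hcond : ∀ k, ∀ᵐ ω ∂μ,
      (μ[Y (k + 1) | ℱ k]) ω ≤ (1 + U k ω) * Y k ω - Z k ω + W k ω) (k : ℕ) :
    ∀ᵐ ω ∂μ, Z k ω ≤ (1 + U k ω) * Y k ω + W k ω := by
  have h0 : 0 ≤ᵐ[μ] μ[Y (k + 1) | ℱ k] :=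
    condExp_nonneg (Filter.Eventually.of_forall fun ω => hYnn (k + 1) ω)
  filter_upwards [h0, hcond k] with ω h1 h2
  simp only [Pi.zero_apply] at h1
  linarith

theorem rsGood_boundU (hUnn : ∀ k, ∀ ω, 0 ≤ U k ω) {n j : ℕ} {ω : Ω}
    (h : rsGood U W n j ω) : U j ω ≤ n :=
  le_trans (Finset.single_le_sum (fun i _ => hUnn i ω) (Finset.self_mem_range_succ j)) h.1

theorem rsGood_boundW (hWnn : ∀ k, ∀ ω, 0 ≤ W k ω) {n j : ℕ} {ω : Ω}
    (h : rsGood U W n j ω) : W j ω ≤ n :=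
  le_trans (Finset.single_le_sum (fun i _ => hWnn i ω) (Finset.self_mem_range_succ j)) h.2

variable (hUnn : ∀ k, ∀ ω, 0 ≤ U k ω) (hYnn : ∀ k, ∀ ω, 0 ≤ Y k ω)
    (hZnn : ∀ k, ∀ ω, 0 ≤ Z k ω) (hWnn : ∀ k, ∀ ω, 0 ≤ W k ω)
    (hUmeas : ∀ k, StronglyMeasurable[ℱ k] (U k))
    (hYmeas : ∀ k, StronglyMeasurable[ℱ k] (Y k))
    (hZmeas : ∀ k, StronglyMeasurable[ℱ k] (Z k))
    (hWmeas : ∀ k, StronglyMeasurable[ℱ k] (W k))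
    (hYint : ∀ k, Integrable (Y k) μ)
    (hcond : ∀ k, ∀ᵐ ω ∂μ,
      (μ[Y (k + 1) | ℱ k]) ω ≤ (1 + U k ω) * Y k ω - Z k ω + W k ω)

include hUnn hYnn hZnn hWnn hUmeas hYmeas hZmeas hWmeas hYint hcond in
theorem rsT_int (n j : ℕ) : Integrable (rsT U Y Z W n j) μ := by
  apply Integrable.mono' (g := fun ω => Y (j + 1) ω + (2 + (n : ℝ)) * Y j ω + 2 * n)
  · exact ((hYint (j + 1)).add ((hYint j).const_mul _)).add (integrable_const _)
  · exact ((rsT_meas hUmeas hYmeas hZmeas hWmeas n j).mono (ℱ.le _)).aestronglyMeasurable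
  · filter_upwards [rsZ_bound hYnn hcond j] with ω hz
    by_cases h : rsGood U W n j ω
    · rw [rsT_of_good h, rsD]
      have hU' : U j ω ≤ n := rsGood_boundU hUnn h
      have hW' : W j ω ≤ n := rsGood_boundW hWnn h
      have ha1 : 0 < rsA U (j + 1) ω := rsA_pos hUnn _ ω
      have ha1' : rsA U (j + 1) ω ≤ 1 := rsA_le_one hUnn _ ω
      have ha0 : 0 < rsA U j ω := rsA_pos hUnn _ ω
      have ha0' : rsA U j ω ≤ 1 := rsA_le_one hUnn _ ω
      have hy1 := hYnn (j + 1) ω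
      have hy0 := hYnn j ω
      have hz0 := hZnn j ω
      have hw0 := hWnn j ω
      have e1 : rsA U (j + 1) ω * Y (j + 1) ω ≤ Y (j + 1) ω :=
        mul_le_of_le_one_left hy1 ha1'
      have e1' : 0 ≤ rsA U (j + 1) ω * Y (j + 1) ω := mul_nonneg ha1.le hy1
      have e2 : rsA U j ω * Y j ω ≤ Y j ω := mul_le_of_le_one_left hy0 ha0'
      have e2' : 0 ≤ rsA U j ω * Y j ω := mul_nonneg ha0.le hy0
      have e4 : rsA U (j + 1) ω * (Z j ω - W j ω) ≤ Z j ω := by nlinarith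
      have e5 : -W j ω ≤ rsA U (j + 1) ω * (Z j ω - W j ω) := by nlinarith
      have e6 : Z j ω ≤ (1 + (n : ℝ)) * Y j ω + n := by nlinarith
      rw [Real.norm_eq_abs, abs_le]
      constructor <;> nlinarith
    · rw [rsT_of_not_good h, norm_zero]
      have hy1 := hYnn (j + 1) ω
      have hy0 := hYnn j ω
      positivity

include hUnn hYnn hZnn hWnn hUmeas hYmeas hZmeas hWmeas hYint hcond in
theorem rsX_int (n k : ℕ) : Integrable (rsX U Y Z W n k) μ := by
  have h1 : Integrable (fun ω => ∑ j ∈ Finset.range k, rsT U Y Z W n j ω) μ :=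
    integrable_finset_sum _ fun j _ =>
      rsT_int hUnn hYnn hZnn hWnn hUmeas hYmeas hZmeas hWmeas hYint hcond n j
  exact ((integrable_const _).add (hYint 0)).add h1

include hUnn hYnn hZnn hWnn hUmeas hYmeas hZmeas hWmeas hYint hcond in
theorem rsX_supermartingale (n : ℕ) : Supermartingale (rsX U Y Z W n) ℱ μ := by
  refine supermartingale_nat (fun k => rsX_meas hUmeas hYmeas hZmeas hWmeas n k)
    (fun k => rsX_int hUnn hYnn hZnn hWnn hUmeas hYmeas hZmeas hWmeas hYint hcond n k) ?_
  intro k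
  set f : Ω → ℝ := {ω | rsGood U W n k ω}.indicator (fun ω => rsA U (k + 1) ω) with hfdef
  set g : Ω → ℝ := {ω | rsGood U W n k ω}.indicator
    (fun ω => rsA U (k + 1) ω * (Z k ω - W k ω) - rsA U k ω * Y k ω) with hgdef
  have hsplit : rsX U Y Z W n (k + 1) = rsX U Y Z W n k + (g + f * Y (k + 1)) := by
    funext ω
    rw [Pi.add_apply, Pi.add_apply, Pi.mul_apply, rsX_succ]
    by_cases h : rsGood U W n k ω
    · rw [rsT_of_good h, rsD, hfdef, hgdef,
        Set.indicator_of_mem (show ω ∈ {ω | rsGood U W n k ω} from h),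
        Set.indicator_of_mem (show ω ∈ {ω | rsGood U W n k ω} from h)]
      ring
    · rw [rsT_of_not_good h, hfdef, hgdef,
        Set.indicator_of_notMem (show ω ∉ {ω | rsGood U W n k ω} from h),
        Set.indicator_of_notMem (show ω ∉ {ω | rsGood U W n k ω} from h)]
      ring
  have hfm : StronglyMeasurable[ℱ k] f :=
    (rsA_meas hUmeas (le_refl (k + 1))).indicator (rsGood_measSet hUmeas hWmeas n k)
  have hgm : StronglyMeasurable[ℱ k] g :=
    (((rsA_meas hUmeas (le_refl (k + 1))).mul ((hZmeas k).sub (hWmeas k))).sub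
      ((rsA_meas hUmeas (by omega)).mul (hYmeas k))).indicator
      (rsGood_measSet hUmeas hWmeas n k)
  have hgint : Integrable g μ := by
    apply Integrable.mono' (g := fun ω => (2 + (n : ℝ)) * Y k ω + 2 * n)
    · exact ((hYint k).const_mul _).add (integrable_const _)
    · exact (hgm.mono (ℱ.le _)).aestronglyMeasurable
    · filter_upwards [rsZ_bound hYnn hcond k] with ω hz
      by_cases h : rsGood U W n k ω
      · rw [hgdef, Set.indicator_of_mem (show ω ∈ {ω | rsGood U W n k ω} from h)]
        have hU' : U k ω ≤ n := rsGood_boundU hUnn h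
        have hW' : W k ω ≤ n := rsGood_boundW hWnn h
        have ha1 : 0 < rsA U (k + 1) ω := rsA_pos hUnn _ ω
        have ha1' : rsA U (k + 1) ω ≤ 1 := rsA_le_one hUnn _ ω
        have ha0 : 0 < rsA U k ω := rsA_pos hUnn _ ω
        have ha0' : rsA U k ω ≤ 1 := rsA_le_one hUnn _ ω
        have hy0 := hYnn k ω
        have hz0 := hZnn k ω
        have hw0 := hWnn k ω
        have e2 : rsA U k ω * Y k ω ≤ Y k ω := mul_le_of_le_one_left hy0 ha0'
        have e2' : 0 ≤ rsA U k ω * Y k ω := mul_nonneg ha0.le hy0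
        have e4 : rsA U (k + 1) ω * (Z k ω - W k ω) ≤ Z k ω := by nlinarith
        have e5 : -W k ω ≤ rsA U (k + 1) ω * (Z k ω - W k ω) := by nlinarith
        have e6 : Z k ω ≤ (1 + (n : ℝ)) * Y k ω + n := by nlinarith
        rw [Real.norm_eq_abs, abs_le]
        constructor <;> nlinarith
      · rw [hgdef, Set.indicator_of_notMem (show ω ∉ {ω | rsGood U W n k ω} from h), norm_zero]
        have hy0 := hYnn k ω
        positivity
  have hfnn : ∀ ω, 0 ≤ f ω := by
    intro ω
    rw [hfdef]
    by_cases h : rsGood U W n k ω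
    · rw [Set.indicator_of_mem (show ω ∈ {ω | rsGood U W n k ω} from h)]
      exact (rsA_pos hUnn _ ω).le
    · rw [Set.indicator_of_notMem (show ω ∉ {ω | rsGood U W n k ω} from h)]
  have hfle : ∀ ω, f ω ≤ 1 := by
    intro ω
    rw [hfdef]
    by_cases h : rsGood U W n k ω
    · rw [Set.indicator_of_mem (show ω ∈ {ω | rsGood U W n k ω} from h)]
      exact rsA_le_one hUnn _ ω
    · rw [Set.indicator_of_notMem (show ω ∉ {ω | rsGood U W n k ω} from h)]
      exact zero_le_one
  have hfY : Integrable (f * Y (k + 1)) μ := by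
    apply Integrable.mono' (hYint (k + 1))
    · exact ((hfm.mono (ℱ.le _)).mul
        ((hYmeas (k + 1)).mono (ℱ.le _))).aestronglyMeasurable
    · filter_upwards with ω
      rw [Pi.mul_apply, Real.norm_eq_abs, abs_of_nonneg (mul_nonneg (hfnn ω) (hYnn _ ω))]
      exact mul_le_of_le_one_left (hYnn _ ω) (hfle ω)
  have h1 : μ[rsX U Y Z W n (k + 1) | ℱ k] =ᵐ[μ]
      μ[rsX U Y Z W n k | ℱ k] + μ[g + f * Y (k + 1) | ℱ k] := by
    rw [hsplit]
    exact condExp_add (rsX_int hUnn hYnn hZnn hWnn hUmeas hYmeas hZmeas hWmeas hYint hcond n k)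
      (hgint.add hfY) _
  have h2 : μ[g + f * Y (k + 1) | ℱ k] =ᵐ[μ] μ[g | ℱ k] + μ[f * Y (k + 1) | ℱ k] :=
    condExp_add hgint hfY _
  have h3 : μ[rsX U Y Z W n k | ℱ k] = rsX U Y Z W n k :=
    condExp_of_stronglyMeasurable (ℱ.le k) (rsX_meas hUmeas hYmeas hZmeas hWmeas n k)
      (rsX_int hUnn hYnn hZnn hWnn hUmeas hYmeas hZmeas hWmeas hYint hcond n k)
  have h4 : μ[g | ℱ k] = g := condExp_of_stronglyMeasurable (ℱ.le k) hgm hgint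
  have h5 : μ[f * Y (k + 1) | ℱ k] =ᵐ[μ] f * μ[Y (k + 1) | ℱ k] :=
    condExp_mul_of_stronglyMeasurable_left hfm hfY (hYint (k + 1))
  filter_upwards [h1, h2, h5, hcond k] with ω e1 e2 e5 ec
  rw [e1, Pi.add_apply, e2, Pi.add_apply, h3, h4, e5, Pi.mul_apply]
  by_cases h : rsGood U W n k ω
  · rw [hfdef, hgdef, Set.indicator_of_mem (show ω ∈ {ω | rsGood U W n k ω} from h),
      Set.indicator_of_mem (show ω ∈ {ω | rsGood U W n k ω} from h)]
    have ha1 : 0 < rsA U (k + 1) ω := rsA_pos hUnn _ ω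
    have hkey : rsA U (k + 1) ω * ((1 + U k ω) * Y k ω - Z k ω + W k ω) =
        rsA U k ω * Y k ω - rsA U (k + 1) ω * Z k ω + rsA U (k + 1) ω * W k ω := by
      rw [← rsA_succ hUnn k ω]
      ring
    have hmul : rsA U (k + 1) ω * (μ[Y (k + 1) | ℱ k]) ω ≤
        rsA U (k + 1) ω * ((1 + U k ω) * Y k ω - Z k ω + W k ω) :=
      mul_le_mul_of_nonneg_left ec ha1.le
    linarith [hmul, hkey.le, hkey.ge]
  · rw [hfdef, hgdef, Set.indicator_of_notMem (show ω ∉ {ω | rsGood U W n k ω} from h),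
      Set.indicator_of_notMem (show ω ∉ {ω | rsGood U W n k ω} from h)]
    simp

include hUnn hYnn hZnn hWnn hUmeas hYmeas hZmeas hWmeas hYint hcond in
theorem rsX_conv (n : ℕ) :
    ∀ᵐ ω ∂μ, ∃ c, Tendsto (fun k => rsX U Y Z W n k ω) atTop (𝓝 c) := by
  have hsm := rsX_supermartingale hUnn hYnn hZnn hWnn hUmeas hYmeas hZmeas hWmeas hYint hcond n
  have hint := fun k => rsX_int hUnn hYnn hZnn hWnn hUmeas hYmeas hZmeas hWmeas hYint hcond n k
  have hbdd : ∀ k, eLpNorm ((-(rsX U Y Z W n)) k) 1 μ ≤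
      ENNReal.ofReal (∫ ω, rsX U Y Z W n 0 ω ∂μ) := by
    intro k
    have h1 : ∫⁻ ω, ‖rsX U Y Z W n k ω‖ₑ ∂μ =
        ∫⁻ ω, ENNReal.ofReal (rsX U Y Z W n k ω) ∂μ :=
      lintegral_congr fun ω => Real.enorm_eq_ofReal (rsX_nonneg hUnn hYnn hZnn hWnn n ω k)
    have heq : eLpNorm (rsX U Y Z W n k) 1 μ = ENNReal.ofReal (∫ ω, rsX U Y Z W n k ω ∂μ) := by
      rw [eLpNorm_one_eq_lintegral_enorm, h1,
        ← ofReal_integral_eq_lintegral_ofReal (hint k)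
          (Filter.Eventually.of_forall fun ω => rsX_nonneg hUnn hYnn hZnn hWnn n ω k)]
    have hle : ∫ ω, rsX U Y Z W n k ω ∂μ ≤ ∫ ω, rsX U Y Z W n 0 ω ∂μ := by
      have h2 := hsm.setIntegral_le (Nat.zero_le k) (MeasurableSet.univ)
      simpa [setIntegral_univ] using h2
    rw [show (-(rsX U Y Z W n)) k = -(rsX U Y Z W n k) from rfl, eLpNorm_neg, heq]
    exact ENNReal.ofReal_le_ofReal hle
  have hconv := hsm.neg.exists_ae_tendsto_of_bdd hbdd
  filter_upwards [hconv] with ω hc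
  obtain ⟨c, hc⟩ := hc
  refine ⟨-c, ?_⟩
  have := hc.neg
  simpa using this

end Prob

end RobbinsSiegmundAux

open RobbinsSiegmundAux

/-- Robbins–Siegmund theorem: if `(U k)`, `(Y k)`, `(Z k)`, `(W k)` are nonnegative
adapted sequences with `𝔼(Y (k+1) | ℱ k) ≤ (1 + U k) Y k - Z k + W k` a.s. and
`∑ U k < ∞`, `∑ W k < ∞` a.s., then `Y k` converges a.s. to a finite random
variable and `∑ Z k < ∞` a.s. -/
theorem robbins_siegmund
    {Ω : Type*} {m0 : MeasurableSpace Ω} (μ : Measure Ω) [IsProbabilityMeasure μ]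
    (ℱ : Filtration ℕ m0)
    (U Y Z W : ℕ → Ω → ℝ)
    (hUnn : ∀ k, ∀ ω, 0 ≤ U k ω) (hYnn : ∀ k, ∀ ω, 0 ≤ Y k ω)
    (hZnn : ∀ k, ∀ ω, 0 ≤ Z k ω) (hWnn : ∀ k, ∀ ω, 0 ≤ W k ω)
    (hUmeas : ∀ k, StronglyMeasurable[ℱ k] (U k))
    (hYmeas : ∀ k, StronglyMeasurable[ℱ k] (Y k))
    (hZmeas : ∀ k, StronglyMeasurable[ℱ k] (Z k))
    (hWmeas : ∀ k, StronglyMeasurable[ℱ k] (W k))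
    (hYint : ∀ k, Integrable (Y k) μ)
    (hcond : ∀ k, ∀ᵐ ω ∂μ,
      (μ[Y (k + 1) | ℱ k]) ω ≤ (1 + U k ω) * Y k ω - Z k ω + W k ω)
    (hU : ∀ᵐ ω ∂μ, Summable fun k => U k ω)
    (hW : ∀ᵐ ω ∂μ, Summable fun k => W k ω) :
    ∃ Ylim : Ω → ℝ,
      (∀ᵐ ω ∂μ, Tendsto (fun k => Y k ω) atTop (nhds (Ylim ω))) ∧
      (∀ᵐ ω ∂μ, Summable fun k => Z k ω) := by
  have hae : ∀ᵐ ω ∂μ,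
      (∀ n : ℕ, ∃ c, Tendsto (fun k => rsX U Y Z W n k ω) atTop (𝓝 c)) ∧
      (Summable fun k => U k ω) ∧ (Summable fun k => W k ω) :=
    ((ae_all_iff.2 fun n =>
      rsX_conv hUnn hYnn hZnn hWnn hUmeas hYmeas hZmeas hWmeas hYint hcond n).and (hU.and hW))
  have key : ∀ᵐ ω ∂μ,
      (∃ c, Tendsto (fun k => Y k ω) atTop (𝓝 c)) ∧ (Summable fun k => Z k ω) := by
    filter_upwards [hae] with ω hω
    obtain ⟨hX, hUs, hWs⟩ := hω
    obtain ⟨n, hn⟩ := exists_nat_ge (max (∑' j, U j ω) (∑' j, W j ω))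
    have hgood : ∀ k, rsGood U W n k ω := by
      intro k
      constructor
      · exact le_trans (hUs.sum_le_tsum (Finset.range (k + 1)) (fun i _ => hUnn i ω))
          (le_trans (le_max_left _ _) hn)
      · exact le_trans (hWs.sum_le_tsum (Finset.range (k + 1)) (fun i _ => hWnn i ω))
          (le_trans (le_max_right _ _) hn)
    obtain ⟨c, hXc⟩ := hX n
    set C := Real.exp (∑' j, U j ω) with hCdef
    have hCpos : 0 < C := Real.exp_pos _
    have hPle : ∀ k, rsP U k ω ≤ C := by
      intro k
      calc rsP U k ω ≤ ∏ j ∈ Finset.range k, Real.exp (U j ω) :=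
            Finset.prod_le_prod (fun j _ => by have := hUnn j ω; linarith)
              (fun j _ => by rw [add_comm]; exact Real.add_one_le_exp (U j ω))
        _ = Real.exp (∑ j ∈ Finset.range k, U j ω) := (Real.exp_sum _ _).symm
        _ ≤ C := Real.exp_le_exp.2 (hUs.sum_le_tsum _ (fun i _ => hUnn i ω))
    have hAinv : ∀ k, C⁻¹ ≤ rsA U k ω := by
      intro k
      exact inv_anti₀ (rsP_pos hUnn k ω) (hPle k)
    have hsumW' : Summable fun j => rsA U (j + 1) ω * W j ω :=
      Summable.of_nonneg_of_le (fun j => mul_nonneg (rsA_pos hUnn _ ω).le (hWnn j ω))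
        (fun j => mul_le_of_le_one_left (hWnn j ω) (rsA_le_one hUnn _ ω)) hWs
    obtain ⟨B, hB⟩ := hXc.bddAbove_range
    have hBs : ∀ k, rsX U Y Z W n k ω ≤ B := fun k => hB (Set.mem_range_self k)
    have haWle : ∀ k, ∑ j ∈ Finset.range k, rsA U (j + 1) ω * W j ω ≤ ∑' j, W j ω := by
      intro k
      exact le_trans (Finset.sum_le_sum fun j _ =>
          mul_le_of_le_one_left (hWnn j ω) (rsA_le_one hUnn _ ω))
        (hWs.sum_le_tsum _ (fun i _ => hWnn i ω))
    have hzsplit : ∀ k, ∑ j ∈ Finset.range k, rsA U (j + 1) ω * (Z j ω - W j ω) =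
        (∑ j ∈ Finset.range k, rsA U (j + 1) ω * Z j ω) -
        ∑ j ∈ Finset.range k, rsA U (j + 1) ω * W j ω := by
      intro k
      simp only [mul_sub]
      rw [Finset.sum_sub_distrib]
    have hsumZ' : Summable fun j => rsA U (j + 1) ω * Z j ω := by
      apply summable_of_sum_range_le
        (c := B - n + ∑' j, W j ω)
        (fun j => mul_nonneg (rsA_pos hUnn _ ω).le (hZnn j ω))
      intro k
      have hmono : ∑ j ∈ Finset.range k, rsA U (j + 1) ω * Z j ω ≤
          ∑ j ∈ Finset.range (k + 1), rsA U (j + 1) ω * Z j ω := by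
        rw [Finset.sum_range_succ]
        have := mul_nonneg (rsA_pos hUnn (k + 1) ω).le (hZnn k ω)
        linarith
      have hcf := rsX_closed (Y := Y) (Z := Z) hUnn hWnn k (hgood k)
      have hY1 : 0 ≤ rsA U (k + 1) ω * Y (k + 1) ω :=
        mul_nonneg (rsA_pos hUnn _ ω).le (hYnn _ ω)
      have h1 := hBs (k + 1)
      rw [hcf, hzsplit (k + 1)] at h1
      have h2 := haWle (k + 1)
      linarith
    have hsumZ : Summable fun j => Z j ω := by
      refine Summable.of_nonneg_of_le (fun j => hZnn j ω) (fun j => ?_) (hsumZ'.mul_left C)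
      have h1 : C * C⁻¹ ≤ C * rsA U (j + 1) ω :=
        mul_le_mul_of_nonneg_left (hAinv (j + 1)) hCpos.le
      rw [mul_inv_cancel₀ hCpos.ne'] at h1
      nlinarith [hZnn j ω]
    have hfsum : Summable fun j => rsA U (j + 1) ω * (Z j ω - W j ω) := by
      simp only [mul_sub]
      exact hsumZ'.sub hsumW'
    have hS := hfsum.hasSum.tendsto_sum_nat
    set S := ∑' j, rsA U (j + 1) ω * (Z j ω - W j ω) with hSdef
    have h1 : Tendsto (fun k => rsX U Y Z W n (k + 1) ω) atTop (𝓝 c) :=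
      hXc.comp (tendsto_add_atTop_nat 1)
    have h2 : Tendsto (fun k => ∑ j ∈ Finset.range (k + 1),
        rsA U (j + 1) ω * (Z j ω - W j ω)) atTop (𝓝 S) :=
      hS.comp (tendsto_add_atTop_nat 1)
    have h3 : Tendsto (fun k => rsX U Y Z W n (k + 1) ω -
        (∑ j ∈ Finset.range (k + 1), rsA U (j + 1) ω * (Z j ω - W j ω)) - n) atTop
        (𝓝 (c - S - n)) := (h1.sub h2).sub tendsto_const_nhds
    have haY : Tendsto (fun k => rsA U (k + 1) ω * Y (k + 1) ω) atTop (𝓝 (c - S - n)) := by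
      apply h3.congr
      intro k
      rw [rsX_closed (Y := Y) (Z := Z) hUnn hWnn k (hgood k)]
      ring
    have hPmono := rsP_mono hUnn ω
    have hPbdd : BddAbove (Set.range fun k => rsP U k ω) := by
      refine ⟨C, ?_⟩
      rintro x ⟨k, rfl⟩
      exact hPle k
    have hPt : Tendsto (fun k => rsP U k ω) atTop (𝓝 (⨆ k, rsP U k ω)) :=
      tendsto_atTop_ciSup hPmono hPbdd
    have hYt : Tendsto (fun k => Y (k + 1) ω) atTop (𝓝 ((c - S - n) * ⨆ k, rsP U k ω)) := by
      have hm := haY.mul (hPt.comp (tendsto_add_atTop_nat 1))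
      apply hm.congr
      intro k
      have hPpos : rsP U (k + 1) ω ≠ 0 := (rsP_pos hUnn (k + 1) ω).ne'
      show rsA U (k + 1) ω * Y (k + 1) ω * rsP U (k + 1) ω = Y (k + 1) ω
      rw [rsA]
      field_simp
    exact ⟨⟨(c - S - n) * ⨆ k, rsP U k ω, (tendsto_add_atTop_iff_nat 1).1 hYt⟩, hsumZ⟩
  refine ⟨fun ω => limUnder atTop (fun k => Y k ω), ?_, ?_⟩
  · filter_upwards [key] with ω hω
    obtain ⟨⟨c, hc⟩, _⟩ := hω
    rwa [hc.limUnder_eq]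
  · filter_upwards [key] with ω hω
    exact hω.2
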